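/- Scalar rational approximation bound: for all x ≥ 0, n ≥ 1, and 0 ≤ β ≤ 1, |(1+x)^{-n} - e^{-nx}| ≤ C x^{β/2} for a constant C independent of n and x. -/

import Mathlib

/-- Scalar rational approximation bound: for `0 ≤ β ≤ 1` there is a constant `C > 0`,
independent of `n` and `x`, such that for all `x ≥ 0` and `n ≥ 1`,
`|(1+x)^{-n} - e^{-nx}| ≤ C x^{β/2}`. -/
theorem stmt17 (β : ℝ) (hβ0 : 0 ≤ β) (hβ1 : β ≤ 1) :
    ∃ C > 0, ∀ x : ℝ, 0 ≤ x → ∀ n : ℕ, 1 ≤ n →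
      |((1 + x)⁻¹) ^ n - Real.exp (-(n : ℝ) * x)| ≤ C * x ^ (β / 2) := by
  refine ⟨1, one_pos, fun x hx n hn => ?_⟩
  rw [one_mul]
  rcases eq_or_lt_of_le hx with h0 | h0
  · rw [← h0]
    simp [Real.rpow_natCast]
    positivity
  have h1x : (0:ℝ) < 1 + x := by linarith
  have hn1 : (1:ℝ) ≤ (n:ℝ) := by exact_mod_cast hn
  set a : ℝ := n * x / (1 + x) with ha
  have hax : 0 < a := by positivity
  -- lower bound: exp(-n x) ≤ ((1+x)⁻¹)^n
  have hlow : Real.exp (-(n:ℝ) * x) ≤ ((1 + x)⁻¹) ^ n := by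
    have h1 : Real.exp (-x) ≤ (1 + x)⁻¹ := by
      rw [Real.exp_neg]
      exact inv_anti₀ h1x (by linarith [Real.add_one_le_exp x])
    calc Real.exp (-(n:ℝ) * x) = (Real.exp (-x)) ^ n := by
          rw [← Real.exp_nat_mul]; ring_nf
      _ ≤ ((1 + x)⁻¹) ^ n := by
          apply pow_le_pow_left₀ (Real.exp_pos _).le h1
  -- upper bound: ((1+x)⁻¹)^n ≤ exp (-a)
  have hup : ((1 + x)⁻¹) ^ n ≤ Real.exp (-a) := by
    have h1 : (1 + x)⁻¹ ≤ Real.exp (-(x / (1 + x))) := by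
      have h2 := Real.add_one_le_exp (-(x / (1 + x)))
      have h3 : (1 + x)⁻¹ = -(x / (1 + x)) + 1 := by
        field_simp
        ring
      linarith
    calc ((1 + x)⁻¹) ^ n ≤ (Real.exp (-(x / (1 + x)))) ^ n := by
          apply pow_le_pow_left₀ (by positivity) h1
      _ = Real.exp (-a) := by
          rw [← Real.exp_nat_mul]; rw [ha]; ring_nf
  -- exp(-a) - exp(-n x) ≤ x
  have hdiff : Real.exp (-a) - Real.exp (-(n:ℝ) * x) ≤ x := by
    have hba : (n:ℝ) * x - a = a * x := by
      rw [ha]; field_simp; ring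
    have h1 : Real.exp (-(n:ℝ) * x) = Real.exp (-a) * Real.exp (-(a * x)) := by
      rw [← Real.exp_add]; congr 1; linarith
    have h2 : 1 - Real.exp (-(a * x)) ≤ a * x := by
      have := Real.add_one_le_exp (-(a * x))
      linarith
    have h3 : Real.exp (-a) * a ≤ 1 := by
      have h4 := Real.add_one_le_exp a
      have h5 : Real.exp (-a) = (Real.exp a)⁻¹ := Real.exp_neg a
      have h6 := Real.exp_pos a
      rw [h5]
      rw [inv_mul_le_iff₀ h6]
      linarith
    calc Real.exp (-a) - Real.exp (-(n:ℝ) * x)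
        = Real.exp (-a) * (1 - Real.exp (-(a * x))) := by rw [h1]; ring
      _ ≤ Real.exp (-a) * (a * x) := by
          apply mul_le_mul_of_nonneg_left h2 (Real.exp_pos _).le
      _ = (Real.exp (-a) * a) * x := by ring
      _ ≤ 1 * x := mul_le_mul_of_nonneg_right h3 hx
      _ = x := one_mul x
  have hd0 : 0 ≤ ((1 + x)⁻¹) ^ n - Real.exp (-(n:ℝ) * x) := by linarith
  rw [abs_of_nonneg hd0]
  have hdx : ((1 + x)⁻¹) ^ n - Real.exp (-(n:ℝ) * x) ≤ x := by linarith
  have hd1 : ((1 + x)⁻¹) ^ n - Real.exp (-(n:ℝ) * x) ≤ 1 := by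
    have : ((1 + x)⁻¹) ^ n ≤ 1 := by
      apply pow_le_one₀ (by positivity)
      rw [inv_le_one_iff₀]; right; linarith
    have := Real.exp_pos (-(n:ℝ) * x)
    linarith
  rcases le_or_gt x 1 with hx1 | hx1
  · calc ((1 + x)⁻¹) ^ n - Real.exp (-(n:ℝ) * x) ≤ x := hdx
      _ = x ^ (1:ℝ) := (Real.rpow_one x).symm
      _ ≤ x ^ (β / 2) := Real.rpow_le_rpow_of_exponent_ge h0 hx1 (by linarith)
  · calc ((1 + x)⁻¹) ^ n - Real.exp (-(n:ℝ) * x) ≤ 1 := hd1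
      _ = (1:ℝ) ^ (β / 2) := (Real.one_rpow _).symm
      _ ≤ x ^ (β / 2) := Real.rpow_le_rpow (by norm_num) hx1.le (by positivity)
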